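/- Pure decision/front lemma for Laver forcing: if D is a dense open subset of Laver forcing and p a Laver tree with stem s₀, then there is a Laver tree q ⊆ p with stem s₀ and a front F ⊆ q such that q^{[s]} ∈ D for every s ∈ F. -/

import Mathlib

/-- A tree on ω^{<ω}: a set of finite sequences closed under initial segments. -/
def IsTree (T : Set (List ℕ)) : Prop :=
  ∀ s t : List ℕ, s <+: t → t ∈ T → s ∈ T

/-- `s` splits in `T`: at least two immediate successors of `s` lie in `T`. -/
def Splits (T : Set (List ℕ)) (s : List ℕ) : Prop :=
  ∃ n m : ℕ, n ≠ m ∧ s ++ [n] ∈ T ∧ s ++ [m] ∈ T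

/-- Perfect (Sacks) tree: nonempty tree in which every node has a splitting extension. -/
def IsPerfect (T : Set (List ℕ)) : Prop :=
  IsTree T ∧ T.Nonempty ∧ ∀ s ∈ T, ∃ t ∈ T, s <+: t ∧ Splits T t

/-- Restriction of a tree at a node: T^{[s]} = {t ∈ T : t ≤ s or s ≤ t}. -/
def restrictTree (T : Set (List ℕ)) (s : List ℕ) : Set (List ℕ) :=
  {t ∈ T | t <+: s ∨ s <+: t}

/-- A branch of `p`: an element of ω^ω all of whose finite initial segments lie in `p`. -/
def IsBranch (p : Set (List ℕ)) (x : ℕ → ℕ) : Prop :=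
  ∀ k : ℕ, (List.range k).map x ∈ p

/-- A front of `p`: an antichain (w.r.t. the initial segment order) meeting every branch. -/
def IsFront (p F : Set (List ℕ)) : Prop :=
  F ⊆ p ∧ (∀ s ∈ F, ∀ t ∈ F, s <+: t → s = t) ∧
    ∀ x : ℕ → ℕ, IsBranch p x → ∃ k, (List.range k).map x ∈ F

/-- The splitting nodes of `p`. -/
def spl (p : Set (List ℕ)) : Set (List ℕ) := {s ∈ p | Splits p s}

/-- The n-th splitting nodes of `p`: splitting nodes with exactly `n` proper initial
segments that are splitting nodes. -/
def splN (p : Set (List ℕ)) (n : ℕ) : Set (List ℕ) :=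
  {s ∈ spl p | {t ∈ spl p | t <+: s ∧ t ≠ s}.ncard = n}

/-- A Laver tree with stem `s₀`: every node is comparable with `s₀`, and every node
extending `s₀` has infinitely many immediate successors in the tree. -/
def IsLaverWithStem (T : Set (List ℕ)) (s₀ : List ℕ) : Prop :=
  IsTree T ∧ s₀ ∈ T ∧ (∀ t ∈ T, t <+: s₀ ∨ s₀ <+: t) ∧
    ∀ t ∈ T, s₀ <+: t → {n : ℕ | t ++ [n] ∈ T}.Infinite

def IsLaver (T : Set (List ℕ)) : Prop := ∃ s₀, IsLaverWithStem T s₀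

/-- Superperfect (Miller) tree. -/
def IsSuperperfect (T : Set (List ℕ)) : Prop :=
  IsTree T ∧ T.Nonempty ∧
    (∀ s ∈ T, {n : ℕ | s ++ [n] ∈ T}.ncard = 1 ∨ {n : ℕ | s ++ [n] ∈ T}.Infinite) ∧
    ∀ s ∈ T, ∃ t ∈ T, s <+: t ∧ {n : ℕ | t ++ [n] ∈ T}.Infinite

/-- Rosłanowski tree. -/
def IsRoslanowski (T : Set (List ℕ)) : Prop :=
  IsTree T ∧ T.Nonempty ∧
    (∀ s ∈ T, {n : ℕ | s ++ [n] ∈ T}.ncard = 1 ∨ ∀ n : ℕ, s ++ [n] ∈ T) ∧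
    ∀ s ∈ T, ∃ t ∈ T, s <+: t ∧ ∀ n : ℕ, t ++ [n] ∈ T

lemma prefix_snoc_cases {u t : List ℕ} {n : ℕ} (h : u <+: t ++ [n]) :
    u <+: t ∨ u = t ++ [n] := by
  rcases le_or_gt u.length t.length with hl | hl
  · exact Or.inl (List.prefix_of_prefix_length_le h (List.prefix_append t [n]) hl)
  · right
    apply h.eq_of_length
    have := h.length_le
    simp only [List.length_append, List.length_singleton] at this ⊢
    omega

lemma initseg_prefix {x : ℕ → ℕ} {j k : ℕ} (h : j ≤ k) :
    (List.range j).map x <+: (List.range k).map x := by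
  refine List.IsPrefix.map x ?_
  have := List.take_prefix j (List.range k)
  rwa [List.take_range, min_eq_left h] at this

lemma snoc_prefix_unique {t u : List ℕ} {n m : ℕ} (h1 : t ++ [n] <+: u)
    (h2 : t ++ [m] <+: u) : n = m := by
  have h3 := List.prefix_of_prefix_length_le h1 h2 (by simp)
  have h4 := h3.eq_of_length (by simp)
  simpa using h4

lemma restrict_eq_self {q : Set (List ℕ)} {s : List ℕ}
    (h : ∀ t ∈ q, t <+: s ∨ s <+: t) : restrictTree q s = q := by
  ext u; exact ⟨fun hu => hu.1, fun hu => ⟨hu, h u hu⟩⟩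

lemma front_singleton {q : Set (List ℕ)} {s : List ℕ} (hq : IsLaverWithStem q s) :
    IsFront q {s} := by
  obtain ⟨htree, hmem, hcomp, -⟩ := hq
  refine ⟨by simpa using hmem, ?_, ?_⟩
  · intro a ha b hb _
    simp only [Set.mem_singleton_iff] at ha hb; rw [ha, hb]
  · intro x hx
    refine ⟨s.length, ?_⟩
    have h1 := hx s.length
    have h2 : ((List.range s.length).map x).length = s.length := by simp
    have : (List.range s.length).map x = s := by
      rcases hcomp _ h1 with h | h
      · exact h.eq_of_length h2
      · exact (h.eq_of_length h2.symm).symm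
    simp [this]

lemma laver_restrict {q : Set (List ℕ)} {s₁ s : List ℕ} (hq : IsLaverWithStem q s₁)
    (hs : s₁ <+: s) (hsq : s ∈ q) : IsLaverWithStem (restrictTree q s) s := by
  obtain ⟨htree, hmem, hcomp, hsucc⟩ := hq
  refine ⟨?_, ⟨hsq, Or.inl List.prefix_rfl⟩, fun t ht => ht.2, ?_⟩
  · intro u v huv hv
    refine ⟨htree u v huv hv.1, ?_⟩
    rcases hv.2 with h | h
    · exact Or.inl (huv.trans h)
    · exact List.prefix_or_prefix_of_prefix huv h
  · intro u hu hsu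
    refine (hsucc u hu.1 (hs.trans hsu)).mono ?_
    exact fun n hn => ⟨hn, Or.inr (hsu.trans (List.prefix_append u [n]))⟩

lemma laver_exists_length {q : Set (List ℕ)} {s₁ : List ℕ} (hq : IsLaverWithStem q s₁)
    (k : ℕ) : ∃ u ∈ q, s₁ <+: u ∧ u.length = s₁.length + k := by
  induction k with
  | zero => exact ⟨s₁, hq.2.1, List.prefix_rfl, rfl⟩
  | succ k ih =>
    obtain ⟨u, hu, hpre, hlen⟩ := ih
    obtain ⟨n, hn⟩ := (hq.2.2.2 u hu hpre).nonempty
    exact ⟨u ++ [n], hn, hpre.trans (List.prefix_append u [n]), by simp [hlen]; omega⟩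

def Good (D : Set (Set (List ℕ))) (p : Set (List ℕ)) (t : List ℕ) : Prop :=
  ∃ q F, IsLaverWithStem q t ∧ q ⊆ restrictTree p t ∧ IsFront q F ∧
    (∀ s ∈ F, t <+: s) ∧ ∀ s ∈ F, restrictTree q s ∈ D

lemma good_of_D {D : Set (Set (List ℕ))} {p q : Set (List ℕ)} {t : List ℕ}
    (hq : IsLaverWithStem q t) (hsub : q ⊆ restrictTree p t) (hqD : q ∈ D) :
    Good D p t := by
  refine ⟨q, {t}, hq, hsub, front_singleton hq, ?_, ?_⟩
  · intro s hs; simp only [Set.mem_singleton_iff] at hs; subst hs; exact List.prefix_rfl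
  · intro s hs; simp only [Set.mem_singleton_iff] at hs; subst hs
    rwa [restrict_eq_self hq.2.2.1]

lemma amalg {D : Set (Set (List ℕ))} {p : Set (List ℕ)} (hp : IsTree p) {t : List ℕ}
    (ht : t ∈ p) (hS : {n | Good D p (t ++ [n])}.Infinite) : Good D p t := by
  classical
  set S := {n | Good D p (t ++ [n])} with hS_def
  have hch : ∀ n : ℕ, ∃ qn Fn : Set (List ℕ), n ∈ S →
      IsLaverWithStem qn (t ++ [n]) ∧ qn ⊆ restrictTree p (t ++ [n]) ∧ IsFront qn Fn ∧
      (∀ s ∈ Fn, t ++ [n] <+: s) ∧ ∀ s ∈ Fn, restrictTree qn s ∈ D := by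
    intro n
    by_cases hn : n ∈ S
    · obtain ⟨qn, Fn, h⟩ := hn; exact ⟨qn, Fn, fun _ => h⟩
    · exact ⟨∅, ∅, fun h => absurd h hn⟩
  choose Q F hQF using hch
  set q : Set (List ℕ) := {u | u <+: t} ∪ ⋃ n ∈ S, Q n with hq_def
  have hmemQ : ∀ n ∈ S, Q n ⊆ q := fun n hn u hu =>
    Set.mem_union_right _ (Set.mem_biUnion hn hu)
  have hmemL : ∀ u : List ℕ, u <+: t → u ∈ q := fun u h => Set.mem_union_left _ h
  have hcase : ∀ u ∈ q, u <+: t ∨ ∃ n ∈ S, u ∈ Q n := by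
    intro u hu
    rcases hu with hu | hu
    · exact Or.inl hu
    · right; simpa using hu
  have hcompQ : ∀ n ∈ S, ∀ u ∈ Q n, u <+: t ∨ t ++ [n] <+: u := by
    intro n hn u hu
    rcases (hQF n hn).1.2.2.1 u hu with h | h
    · rcases prefix_snoc_cases h with h' | h'
      · exact Or.inl h'
      · exact Or.inr (h' ▸ List.prefix_rfl)
    · exact Or.inr h
  have hcomp : ∀ u ∈ q, u <+: t ∨ t <+: u := by
    intro u hu
    rcases hcase u hu with h | ⟨n, hn, hun⟩
    · exact Or.inl h
    · rcases hcompQ n hn u hun with h | h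
      · exact Or.inl h
      · exact Or.inr ((List.prefix_append t [n]).trans h)
  have hup : ∀ u ∈ q, t <+: u → u ≠ t → ∃ n ∈ S, u ∈ Q n ∧ t ++ [n] <+: u := by
    intro u hu htu hne
    rcases hcase u hu with h | ⟨n, hn, hun⟩
    · exact absurd (h.eq_of_length (le_antisymm h.length_le htu.length_le)) hne
    · refine ⟨n, hn, hun, ?_⟩
      rcases hcompQ n hn u hun with h | h
      · exact absurd (h.eq_of_length (le_antisymm h.length_le htu.length_le)) hne
      · exact h
  have hqlaver : IsLaverWithStem q t := by
    refine ⟨?_, hmemL t List.prefix_rfl, hcomp, ?_⟩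
    · intro u v huv hv
      rcases hcase v hv with h | ⟨n, hn, hvn⟩
      · exact hmemL u (huv.trans h)
      · exact hmemQ n hn ((hQF n hn).1.1 u v huv hvn)
    · intro u hu htu
      by_cases hne : u = t
      · subst hne
        refine hS.mono ?_
        exact fun n hn => hmemQ n hn (hQF n hn).1.2.1
      · obtain ⟨n, hn, hun, hpre⟩ := hup u hu htu hne
        refine ((hQF n hn).1.2.2.2 u hun hpre).mono ?_
        exact fun m hm => hmemQ n hn hm
  have hqsub : q ⊆ restrictTree p t := by
    intro u hu
    rcases hcase u hu with h | ⟨n, hn, hun⟩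
    · exact ⟨hp u t h ht, Or.inl h⟩
    · exact ⟨((hQF n hn).2.1 hun).1, hcomp u hu⟩
  refine ⟨q, ⋃ n ∈ S, F n, hqlaver, hqsub, ⟨?_, ?_, ?_⟩, ?_, ?_⟩
  · intro s hs
    simp only [Set.mem_iUnion] at hs
    obtain ⟨n, hn, hsn⟩ := hs
    exact hmemQ n hn ((hQF n hn).2.2.1.1 hsn)
  · intro a ha b hb hab
    simp only [Set.mem_iUnion] at ha hb
    obtain ⟨n, hn, han⟩ := ha
    obtain ⟨m, hm, hbm⟩ := hb
    have h1 : t ++ [n] <+: a := (hQF n hn).2.2.2.1 a han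
    have h2 : t ++ [m] <+: b := (hQF m hm).2.2.2.1 b hbm
    have hnm : n = m := snoc_prefix_unique (h1.trans hab) h2
    subst hnm
    exact (hQF n hn).2.2.1.2.1 a han b hbm hab
  · intro x hx
    have h1 : (List.range (t.length + 1)).map x ∈ q := hx _
    have hlen1 : ((List.range (t.length + 1)).map x).length = t.length + 1 := by simp
    have htu1 : t <+: (List.range (t.length + 1)).map x := by
      rcases hcomp _ h1 with h | h
      · exact absurd h.length_le (by omega)
      · exact h
    have hne1 : (List.range (t.length + 1)).map x ≠ t := by
      intro h; have := congrArg List.length h; omega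
    obtain ⟨n, hn, hu1n, hpre1⟩ := hup _ h1 htu1 hne1
    have hu1eq : t ++ [n] = (List.range (t.length + 1)).map x :=
      hpre1.eq_of_length (by simp)
    have hbr : IsBranch (Q n) x := by
      intro k
      rcases le_or_gt k (t.length + 1) with hk | hk
      · exact (hQF n hn).1.1 _ _ (hu1eq ▸ initseg_prefix (x := x) hk) hu1n
      · have hk' : (List.range k).map x ∈ q := hx k
        have hpu : (List.range (t.length + 1)).map x <+: (List.range k).map x :=
          initseg_prefix (by omega)
        have htu : t <+: (List.range k).map x := htu1.trans hpu
        have hne : (List.range k).map x ≠ t := by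
          intro h; have := congrArg List.length h; simp at this; omega
        obtain ⟨m, hm, humem, hprem⟩ := hup _ hk' htu hne
        have : m = n := snoc_prefix_unique hprem (hu1eq ▸ hpu)
        subst this; exact humem
    obtain ⟨k, hk⟩ := (hQF n hn).2.2.1.2.2 x hbr
    exact ⟨k, Set.mem_biUnion hn hk⟩
  · intro s hs
    simp only [Set.mem_iUnion] at hs
    obtain ⟨n, hn, hsn⟩ := hs
    exact (List.prefix_append t [n]).trans ((hQF n hn).2.2.2.1 s hsn)
  · intro s hs
    simp only [Set.mem_iUnion] at hs
    obtain ⟨n, hn, hsn⟩ := hs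
    have hts : t ++ [n] <+: s := (hQF n hn).2.2.2.1 s hsn
    have heq : restrictTree q s = restrictTree (Q n) s := by
      ext u
      constructor
      · rintro ⟨hu, hcs⟩
        have htnu : u <+: t ++ [n] ∨ t ++ [n] <+: u := by
          rcases hcs with h | h
          · exact List.prefix_or_prefix_of_prefix h hts
          · exact Or.inr (hts.trans h)
        have humem : u ∈ Q n := by
          rcases htnu with h | h
          · exact (hQF n hn).1.1 _ _ h (hQF n hn).1.2.1
          · have htu : t <+: u := (List.prefix_append t [n]).trans h
            have hne : u ≠ t := by
              intro he; subst he
              have := h.length_le; simp at this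
            obtain ⟨m, hm, humem, hprem⟩ := hup u hu htu hne
            have : m = n := snoc_prefix_unique hprem h
            subst this; exact humem
        exact ⟨humem, hcs⟩
      · rintro ⟨hu, hcs⟩
        exact ⟨hmemQ n hn hu, hcs⟩
    rw [heq]
    exact (hQF n hn).2.2.2.2 s hsn

/-- pure decision / front lemma for Laver forcing. -/
theorem laver_pure_decision (D : Set (Set (List ℕ))) (hD : ∀ q ∈ D, IsLaver q)
    (hdense : ∀ p, IsLaver p → ∃ q ∈ D, q ⊆ p)
    (hopen : ∀ q ∈ D, ∀ r, IsLaver r → r ⊆ q → r ∈ D)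
    (p : Set (List ℕ)) (s₀ : List ℕ) (hp : IsLaverWithStem p s₀) :
    ∃ q, IsLaverWithStem q s₀ ∧ q ⊆ p ∧
      ∃ F, IsFront q F ∧ ∀ s ∈ F, restrictTree q s ∈ D := by
  classical
  obtain ⟨hptree, hps0, hpcomp, hpsucc⟩ := hp
  by_cases hgood : Good D p s₀
  · obtain ⟨q, F, hq, hsub, hfront, hext, hres⟩ := hgood
    exact ⟨q, hq, fun u hu => (hsub hu).1, F, hfront, hres⟩
  · exfalso
    have hbadstep : ∀ u ∈ p, s₀ <+: u → ¬ Good D p u →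
        {n | u ++ [n] ∈ p ∧ ¬ Good D p (u ++ [n])}.Infinite := by
      intro u hu hsu hbad
      by_contra hfin
      rw [Set.not_infinite] at hfin
      refine hbad (amalg hptree hu ?_)
      have h1 : {n | u ++ [n] ∈ p}.Infinite := hpsucc u hu hsu
      refine (h1.diff hfin).mono ?_
      rintro n ⟨hn1, hn2⟩
      by_contra hg
      exact hn2 ⟨hn1, hg⟩
    set r : Set (List ℕ) :=
      {u ∈ p | u <+: s₀ ∨ (s₀ <+: u ∧ ∀ w, s₀ <+: w → w <+: u → ¬ Good D p w)}
      with hr_def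
    have hrsub : r ⊆ p := fun u hu => hu.1
    have hrbadpref : ∀ u ∈ r, s₀ <+: u → ∀ w, s₀ <+: w → w <+: u → ¬ Good D p w := by
      intro u hu hsu w hsw hwu
      rcases hu.2 with h | h
      · have hus : u = s₀ := h.eq_of_length (le_antisymm h.length_le hsu.length_le)
        rw [hus] at hwu
        have hws : w = s₀ := hwu.eq_of_length (le_antisymm hwu.length_le hsw.length_le)
        rw [hws]; exact hgood
      · exact h.2 w hsw hwu
    have hrlaver : IsLaverWithStem r s₀ := by
      refine ⟨?_, ⟨hps0, Or.inl List.prefix_rfl⟩, fun u hu => ?_, ?_⟩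
      · intro u v huv hv
        refine ⟨hptree u v huv hv.1, ?_⟩
        rcases hv.2 with h | h
        · exact Or.inl (huv.trans h)
        · rcases List.prefix_or_prefix_of_prefix huv h.1 with h' | h'
          · exact Or.inl h'
          · exact Or.inr ⟨h', fun w hsw hwu => h.2 w hsw (hwu.trans huv)⟩
      · rcases hu.2 with h | h
        · exact Or.inl h
        · exact Or.inr h.1
      · intro u hu hsu
        have hbadu : ¬ Good D p u := hrbadpref u hu hsu u hsu List.prefix_rfl
        refine (hbadstep u hu.1 hsu hbadu).mono ?_
        rintro n ⟨hn1, hn2⟩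
        refine ⟨hn1, Or.inr ⟨hsu.trans (List.prefix_append u [n]), ?_⟩⟩
        intro w hsw hwu
        rcases prefix_snoc_cases hwu with h | h
        · exact hrbadpref u hu hsu w hsw h
        · exact h ▸ hn2
    obtain ⟨qD, hqD, hqDr⟩ := hdense r ⟨s₀, hrlaver⟩
    obtain ⟨s1, hq1⟩ := hD qD hqD
    have hs1r : s1 ∈ r := hqDr hq1.2.1
    rcases hs1r.2 with hcase | hcase
    · obtain ⟨u, hu, hs1u, hulen⟩ := laver_exists_length hq1 (s₀.length - s1.length)
      have hulen' : u.length = s₀.length := by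
        have := hcase.length_le; omega
      have hus0 : u = s₀ := by
        have hur : u ∈ r := hqDr hu
        rcases hur.2 with h | h
        · exact h.eq_of_length (by omega)
        · exact (h.1.eq_of_length (by omega)).symm
      rw [hus0] at hu hs1u
      have hq' := laver_restrict hq1 hs1u hu
      have hq'D : restrictTree qD s₀ ∈ D :=
        hopen qD hqD _ ⟨s₀, hq'⟩ (fun v hv => hv.1)
      refine hgood (good_of_D hq' ?_ hq'D)
      intro v hv
      exact ⟨hrsub (hqDr hv.1), hv.2⟩
    · have hgs1 : Good D p s1 := by
        refine good_of_D hq1 ?_ hqD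
        intro v hv
        exact ⟨hrsub (hqDr hv), hq1.2.2.1 v hv⟩
      exact hrbadpref s1 hs1r hcase.1 s1 hcase.1 List.prefix_rfl hgs1
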